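/- Let (f,g) ∈ 𝒞 with unique minimal set K, and let J ⊆ int(W) be a nonempty open interval with J∩K ≠ ∅. If J ⊆ int(R_f\R_g), then 𝓖(J)∩K ≠ ∅; symmetrically, if J ⊆ int(R_g\R_f), then 𝓕(J)∩K ≠ ∅. -/
import Mathlib


open Set Function MeasureTheory

noncomputable section

namespace IFSPaper

/-- The closed unit interval `I = [0,1]` as a subset of `ℝ`. -/
def unitI : Set ℝ := Set.Icc 0 1

/-- Membership in the class `𝒜`: `f, g : I → I` are `C¹` diffeomorphisms onto their
images with `f 0 = 0`, `g 1 = 1`, `f x < x < g x` on `(0,1)` and `0 < g 0 < f 1 < 1`. -/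
structure MemA (f g : ℝ → ℝ) : Prop where
  f_maps : Set.MapsTo f unitI unitI
  g_maps : Set.MapsTo g unitI unitI
  f_c1 : ContDiff ℝ 1 f
  g_c1 : ContDiff ℝ 1 g
  f_inj : Set.InjOn f unitI
  g_inj : Set.InjOn g unitI
  f_deriv_ne : ∀ x ∈ unitI, deriv f x ≠ 0
  g_deriv_ne : ∀ x ∈ unitI, deriv g x ≠ 0
  f_zero : f 0 = 0
  g_one : g 1 = 1
  f_lt_id : ∀ x ∈ Set.Ioo (0:ℝ) 1, f x < x
  id_lt_g : ∀ x ∈ Set.Ioo (0:ℝ) 1, x < g x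
  g0_pos : 0 < g 0
  g0_lt_f1 : g 0 < f 1
  f1_lt_one : f 1 < 1

/-- The element of the semigroup `⟨f,g⟩₊` associated to a word in the two generators
(`true ↦ f`, `false ↦ g`). -/
def word (f g : ℝ → ℝ) : List Bool → ℝ → ℝ
  | [] => id
  | b :: t => (if b then f else g) ∘ word f g t

/-- The semigroup orbit `O₊(x) = {φ x : φ ∈ ⟨f,g⟩₊}` of a point `x`. -/
def orbitP (f g : ℝ → ℝ) (x : ℝ) : Set ℝ :=
  {y | ∃ w : List Bool, w ≠ [] ∧ word f g w x = y}

/-- `K` is a minimal set for the action of `⟨f,g⟩₊` on `I`. -/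
def IsMinimalSet (f g : ℝ → ℝ) (K : Set ℝ) : Prop :=
  K.Nonempty ∧ K ⊆ unitI ∧ ∀ x ∈ K, closure (orbitP f g x) = K

/-- The overlapping region `W = [g 0, f 1]`. -/
def ovW (f g : ℝ → ℝ) : Set ℝ := Set.Icc (g 0) (f 1)

/-- The fundamental domain `Fₙ = [f^[n+1] 1, f^[n] 1]`. -/
def Fint (f : ℝ → ℝ) (n : ℕ) : Set ℝ := Set.Icc (f^[n+1] 1) (f^[n] 1)

/-- The fundamental domain `Gₙ = [g^[n] 0, g^[n+1] 0]`. -/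
def Gint (g : ℝ → ℝ) (n : ℕ) : Set ℝ := Set.Icc (g^[n] 0) (g^[n+1] 0)

/-- Single overlapping property `So`: `f² 1 < g 0` and `f 1 < g² 0`. -/
def So (f g : ℝ → ℝ) : Prop := f (f 1) < g 0 ∧ f 1 < g (g 0)

/-- A (nonempty) closed bounded interval. -/
def IsClosedInterval (A : Set ℝ) : Prop := ∃ a b : ℝ, a ≤ b ∧ A = Set.Icc a b

/-- A closed bounded interval with nonempty interior. -/
def IsNondegClosedInterval (A : Set ℝ) : Prop := ∃ a b : ℝ, a < b ∧ A = Set.Icc a b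

/-- A nonempty open bounded interval. -/
def IsOpenInterval (J : Set ℝ) : Prop := ∃ a b : ℝ, a < b ∧ J = Set.Ioo a b

/-- Hole property `Ho` witnessed by the pair of holes `(Hf, Hg)`. -/
def HoleAt (f g : ℝ → ℝ) (Hf Hg : Set ℝ) : Prop :=
  IsNondegClosedInterval Hf ∧ IsNondegClosedInterval Hg ∧
  Hf ⊆ interior (Fint f 1 \ ovW f g) ∧
  Hg ⊆ interior (Gint g 1 \ ovW f g) ∧
  g '' Hf = Hg ∧ f '' Hg = Hf

/-- Hole property `Ho`. -/
def Ho (f g : ℝ → ℝ) : Prop := ∃ Hf Hg : Set ℝ, HoleAt f g Hf Hg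

/-- The induced (first-return) map `𝓕 : F₁ \ {f 1} → G₁`,
`𝓕 x = g^[-n x] (f⁻¹ x)` where `n x` is least with `g^[-n x] (f⁻¹ x) ∈ G₁`. -/
def calF (f g : ℝ → ℝ) (x : ℝ) : ℝ :=
  (Function.invFunOn g unitI)^[sInf {n : ℕ |
      (Function.invFunOn g unitI)^[n] (Function.invFunOn f unitI x) ∈ Gint g 1}]
    (Function.invFunOn f unitI x)

/-- The induced (first-return) map `𝓖 : G₁ \ {g 0} → F₁`. -/
def calG (f g : ℝ → ℝ) (x : ℝ) : ℝ :=
  (Function.invFunOn f unitI)^[sInf {n : ℕ |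
      (Function.invFunOn f unitI)^[n] (Function.invFunOn g unitI x) ∈ Fint f 1}]
    (Function.invFunOn g unitI x)

/-- Eventual expansion property `Ee`: `𝓕` is uniformly expanding outside `Hf`
and `𝓖` outside `Hg` (at all points where the derivative makes sense). -/
def Ee (f g : ℝ → ℝ) (Hf Hg : Set ℝ) : Prop :=
  ∃ μ : ℝ, 1 < μ ∧
    (∀ y ∈ Fint f 1 \ Hf, DifferentiableAt ℝ (calF f g) y → μ < deriv (calF f g) y) ∧
    (∀ y ∈ Gint g 1 \ Hg, DifferentiableAt ℝ (calG f g) y → μ < deriv (calG f g) y)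

/-- The ruination region `R_f = 𝓕⁻¹(Hg) ⊆ F₁`. -/
def Rf (f g : ℝ → ℝ) (Hg : Set ℝ) : Set ℝ :=
  {x | x ∈ Fint f 1 \ {f 1} ∧ calF f g x ∈ Hg}

/-- The ruination region `R_g = 𝓖⁻¹(Hf) ⊆ G₁`. -/
def Rg (f g : ℝ → ℝ) (Hf : Set ℝ) : Set ℝ :=
  {x | x ∈ Gint g 1 \ {g 0} ∧ calG f g x ∈ Hf}

/-- Castration property `Ca`: `W ⊆ int R_f ∪ int R_g`. -/
def Ca (f g : ℝ → ℝ) (Hf Hg : Set ℝ) : Prop :=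
  ovW f g ⊆ interior (Rf f g Hg) ∪ interior (Rg f g Hf)

/-- Membership in the class `𝒞` with the given holes `(Hf, Hg)`:
`(f,g) ∈ 𝒜` together with `So`, `Ho`, `Ee` and `Ca`. -/
def MemC (f g : ℝ → ℝ) (Hf Hg : Set ℝ) : Prop :=
  MemA f g ∧ So f g ∧ HoleAt f g Hf Hg ∧ Ee f g Hf Hg ∧ Ca f g Hf Hg

/-- The interval `I₋₁ = [0, 1/3 - ε]` of the appendix example. -/
def Im1 (ε : ℝ) : Set ℝ := Set.Icc 0 (1/3 - ε)

/-- The interval `I₀ = [1/3 + ε, 2/3 - ε]` of the appendix example. -/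
def Iz (ε : ℝ) : Set ℝ := Set.Icc (1/3 + ε) (2/3 - ε)

/-- The interval `I₁ = [2/3 + ε, 1]` of the appendix example. -/
def Ip1 (ε : ℝ) : Set ℝ := Set.Icc (2/3 + ε) 1

/-- The inclusion property of the appendix example. -/
def InclusionProp (f g : ℝ → ℝ) (ε : ℝ) : Prop :=
  f '' Im1 ε ⊆ Im1 ε ∧ f '' Iz ε ⊆ interior (Im1 ε) ∧ f '' Ip1 ε ⊆ interior (Iz ε) ∧
  g '' Ip1 ε ⊆ Ip1 ε ∧ g '' Iz ε ⊆ interior (Ip1 ε) ∧ g '' Im1 ε ⊆ interior (Iz ε)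

/-- The strong uniform contraction property of the appendix example. -/
def StrongContraction (f g : ℝ → ℝ) (ε lam : ℝ) : Prop :=
  ∀ x ∈ Im1 ε ∪ Iz ε ∪ Ip1 ε, deriv f x < lam ∧ deriv g x < lam


/-! ### Auxiliary lemmas -/

lemma mem01 : (0:ℝ) ∈ unitI := ⟨le_refl 0, zero_le_one⟩
lemma mem11 : (1:ℝ) ∈ unitI := ⟨zero_le_one, le_refl 1⟩

lemma Fint_one (f : ℝ → ℝ) : Fint f 1 = Set.Icc (f (f 1)) (f 1) := by
  simp [Fint, Function.iterate_succ_apply', Function.iterate_one]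

lemma Gint_one (g : ℝ → ℝ) : Gint g 1 = Set.Icc (g 0) (g (g 0)) := by
  simp [Gint, Function.iterate_succ_apply', Function.iterate_one]

section Aux

variable {f g : ℝ → ℝ} {Hf Hg K : Set ℝ}

lemma f_mono (hA : MemA f g) : StrictMonoOn f unitI := by
  have h0 : f 0 ≤ f 1 := by
    rw [hA.f_zero]; exact (lt_trans hA.g0_pos hA.g0_lt_f1).le
  exact ContinuousOn.strictMonoOn_of_injOn_Icc zero_le_one h0
    (hA.f_c1.continuous.continuousOn) hA.f_inj

lemma g_mono (hA : MemA f g) : StrictMonoOn g unitI := by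
  have h0 : g 0 ≤ g 1 := by rw [hA.g_one]; exact (hA.g_maps mem01).2
  exact ContinuousOn.strictMonoOn_of_injOn_Icc zero_le_one h0
    (hA.g_c1.continuous.continuousOn) hA.g_inj

lemma word_maps (hA : MemA f g) (w : List Bool) {x : ℝ} (hx : x ∈ unitI) :
    word f g w x ∈ unitI := by
  induction w with
  | nil => exact hx
  | cons b t ih =>
    cases b
    · show g (word f g t x) ∈ unitI; exact hA.g_maps ih
    · show f (word f g t x) ∈ unitI; exact hA.f_maps ih

lemma word_mem_K (hK : IsMinimalSet f g K) {x : ℝ} (hx : x ∈ K) (w : List Bool) :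
    word f g w x ∈ K := by
  cases w with
  | nil => exact hx
  | cons b t =>
    have h1 : word f g (b :: t) x ∈ orbitP f g x := ⟨b :: t, by simp, rfl⟩
    have h2 := hK.2.2 x hx
    rw [← h2]
    exact subset_closure h1

lemma word_cons_true (w : List Bool) (x : ℝ) :
    word f g (true :: w) x = f (word f g w x) := rfl

lemma word_cons_false (w : List Bool) (x : ℝ) :
    word f g (false :: w) x = g (word f g w x) := rfl

lemma word_replicate_true (u : List Bool) (x : ℝ) :
    ∀ j : ℕ, word f g (List.replicate j true ++ u) x = f^[j] (word f g u x) := by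
  intro j
  induction j with
  | zero => simp
  | succ j ih =>
    rw [List.replicate_succ, List.cons_append, word_cons_true, ih,
      Function.iterate_succ_apply']

lemma word_replicate_false (u : List Bool) (x : ℝ) :
    ∀ j : ℕ, word f g (List.replicate j false ++ u) x = g^[j] (word f g u x) := by
  intro j
  induction j with
  | zero => simp
  | succ j ih =>
    rw [List.replicate_succ, List.cons_append, word_cons_false, ih,
      Function.iterate_succ_apply']

lemma mem_Hf_facts (hA : MemA f g) (hH : HoleAt f g Hf Hg) {z : ℝ} (hz : z ∈ Hf) :
    z ∈ unitI ∧ z < g 0 := by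
  have h1 : z ∈ Fint f 1 \ ovW f g := interior_subset (hH.2.2.1 hz)
  rw [Fint_one] at h1
  have hf1 : f 1 ∈ unitI := hA.f_maps mem11
  have hff1 : f (f 1) ∈ unitI := hA.f_maps hf1
  have hzI : z ∈ unitI := ⟨le_trans hff1.1 h1.1.1, le_trans h1.1.2 hf1.2⟩
  refine ⟨hzI, ?_⟩
  by_contra hlt
  push_neg at hlt
  exact h1.2 ⟨hlt, h1.1.2⟩

lemma mem_Hg_facts (hA : MemA f g) (hH : HoleAt f g Hf Hg) {z : ℝ} (hz : z ∈ Hg) :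
    z ∈ unitI ∧ f 1 < z := by
  have h1 : z ∈ Gint g 1 \ ovW f g := interior_subset (hH.2.2.2.1 hz)
  rw [Gint_one] at h1
  have hg0 : g 0 ∈ unitI := hA.g_maps mem01
  have hgg0 : g (g 0) ∈ unitI := hA.g_maps hg0
  have hzI : z ∈ unitI := ⟨le_trans hg0.1 h1.1.1, le_trans h1.1.2 hgg0.2⟩
  refine ⟨hzI, ?_⟩
  by_contra hlt
  push_neg at hlt
  exact h1.2 ⟨h1.1.1, hlt⟩

/-- No point of the `⟨f,g⟩₊`-orbit of a point of `W` lies in a hole. -/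
lemma no_hole (hA : MemA f g) (hH : HoleAt f g Hf Hg)
    {x : ℝ} (hx : x ∈ ovW f g) (w : List Bool) :
    word f g w x ∉ Hf ∧ word f g w x ∉ Hg := by
  have hxI : x ∈ unitI := by
    have hf1 : f 1 ∈ unitI := hA.f_maps mem11
    exact ⟨le_trans hA.g0_pos.le hx.1, le_trans hx.2 hf1.2⟩
  induction w with
  | nil =>
    constructor
    · intro h
      exact absurd hx.1 (not_le.mpr (mem_Hf_facts hA hH h).2)
    · intro h
      exact absurd hx.2 (not_le.mpr (mem_Hg_facts hA hH h).2)
  | cons b t ih =>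
    have hyI : word f g t x ∈ unitI := word_maps hA t hxI
    cases b
    · constructor
      · intro h
        rw [word_cons_false] at h
        have hlt : g (word f g t x) < g 0 := (mem_Hf_facts hA hH h).2
        have hge : g 0 ≤ g (word f g t x) :=
          (g_mono hA).monotoneOn mem01 hyI hyI.1
        exact absurd hge (not_le.mpr hlt)
      · intro h
        rw [word_cons_false, ← hH.2.2.2.2.1] at h
        obtain ⟨p, hp, hfp⟩ := h
        have hpI : p ∈ unitI := (mem_Hf_facts hA hH hp).1
        have hpe : p = word f g t x := hA.g_inj hpI hyI hfp
        exact ih.1 (hpe ▸ hp)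
    · constructor
      · intro h
        rw [word_cons_true, ← hH.2.2.2.2.2] at h
        obtain ⟨p, hp, hfp⟩ := h
        have hpI : p ∈ unitI := (mem_Hg_facts hA hH hp).1
        have hpe : p = word f g t x := hA.f_inj hpI hyI hfp
        exact ih.2 (hpe ▸ hp)
      · intro h
        rw [word_cons_true] at h
        have hlt : f 1 < f (word f g t x) := (mem_Hg_facts hA hH h).2
        have hge : f (word f g t x) ≤ f 1 :=
          (f_mono hA).monotoneOn hyI mem11 hyI.2
        exact absurd hge (not_le.mpr hlt)

/-- An orbit point below `f 1` is a forward `f`-iterate of an orbit point in `F₁`. -/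
lemma ladder_f (hA : MemA f g) (hSo : So f g) {x : ℝ}
    (hx : x ∈ Set.Ioo (g 0) (f 1)) (hxI : x ∈ unitI) :
    ∀ w : List Bool, 0 < word f g w x → word f g w x ≤ f 1 →
      ∃ (k : ℕ) (u : List Bool),
        word f g u x ∈ Fint f 1 ∧ f^[k] (word f g u x) = word f g w x := by
  intro w
  induction w with
  | nil =>
    intro _ _
    exact ⟨0, [], by rw [Fint_one]; exact ⟨(lt_trans hSo.1 hx.1).le, hx.2.le⟩, rfl⟩
  | cons b t ih =>
    intro h0 h1
    by_cases hF : f (f 1) ≤ word f g (b :: t) x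
    · exact ⟨0, b :: t, by rw [Fint_one]; exact ⟨hF, h1⟩, rfl⟩
    · push_neg at hF
      have hyI : word f g t x ∈ unitI := word_maps hA t hxI
      cases b
      · exfalso
        rw [word_cons_false] at hF
        have hge : g 0 ≤ g (word f g t x) := (g_mono hA).monotoneOn mem01 hyI hyI.1
        exact absurd hge (not_le.mpr (lt_trans hF hSo.1))
      · rw [word_cons_true] at hF h0 ⊢
        have hf1 : f 1 ∈ unitI := hA.f_maps mem11
        have hy1 : word f g t x < f 1 := ((f_mono hA).lt_iff_lt hyI hf1).mp hF
        have hy0 : 0 < word f g t x :=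
          ((f_mono hA).lt_iff_lt mem01 hyI).mp (by rwa [hA.f_zero])
        obtain ⟨k, u, hmem, hiter⟩ := ih hy0 hy1.le
        exact ⟨k + 1, u, hmem, by rw [Function.iterate_succ_apply', hiter]⟩

/-- An orbit point above `g 0` is a forward `g`-iterate of an orbit point in `G₁`. -/
lemma ladder_g (hA : MemA f g) (hSo : So f g) {x : ℝ}
    (hx : x ∈ Set.Ioo (g 0) (f 1)) (hxI : x ∈ unitI) :
    ∀ w : List Bool, g 0 ≤ word f g w x → word f g w x < 1 →
      ∃ (k : ℕ) (u : List Bool),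
        word f g u x ∈ Gint g 1 ∧ g^[k] (word f g u x) = word f g w x := by
  intro w
  induction w with
  | nil =>
    intro _ _
    exact ⟨0, [], by rw [Gint_one]; exact ⟨hx.1.le, (lt_trans hx.2 hSo.2).le⟩, rfl⟩
  | cons b t ih =>
    intro h0 h1
    by_cases hF : word f g (b :: t) x ≤ g (g 0)
    · exact ⟨0, b :: t, by rw [Gint_one]; exact ⟨h0, hF⟩, rfl⟩
    · push_neg at hF
      have hyI : word f g t x ∈ unitI := word_maps hA t hxI
      cases b
      · rw [word_cons_false] at hF h1 ⊢
        have hg0 : g 0 ∈ unitI := hA.g_maps mem01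
        have hy0 : g 0 < word f g t x := ((g_mono hA).lt_iff_lt hg0 hyI).mp hF
        have hy1 : word f g t x < 1 :=
          ((g_mono hA).lt_iff_lt hyI mem11).mp (by rwa [hA.g_one])
        obtain ⟨k, u, hmem, hiter⟩ := ih hy0.le hy1
        exact ⟨k + 1, u, hmem, by rw [Function.iterate_succ_apply', hiter]⟩
      · exfalso
        rw [word_cons_true] at hF
        have hle : f (word f g t x) ≤ f 1 := (f_mono hA).monotoneOn hyI mem11 hyI.2
        exact absurd hle (not_le.mpr (lt_trans hSo.2 hF))

lemma invFunOn_iterate {f : ℝ → ℝ} (hinj : Set.InjOn f unitI)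
    (hmaps : Set.MapsTo f unitI unitI) {q : ℝ} (hq : q ∈ unitI) :
    ∀ n k, n ≤ k → (Function.invFunOn f unitI)^[n] (f^[k] q) = f^[k - n] q := by
  intro n
  induction n with
  | zero => intro k _; simp
  | succ n ih =>
    intro k hk
    obtain ⟨k', rfl⟩ : ∃ k', k = k' + 1 := ⟨k - 1, by omega⟩
    rw [Function.iterate_succ_apply, Function.iterate_succ_apply' f,
      hinj.leftInvOn_invFunOn ((hmaps.iterate k') hq), ih k' (by omega)]
    congr 1
    omega

/-- `𝓖` of an orbit point of `x ∈ int W` whose last applied generator was `g`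
is again an orbit point of `x` (or `x` itself). -/
lemma calG_word (hA : MemA f g) (hSo : So f g) {x : ℝ}
    (hx : x ∈ Set.Ioo (g 0) (f 1)) (hxI : x ∈ unitI) (t : List Bool)
    (hz : g (word f g t x) ∈ Set.Ioo (g 0) (f 1)) :
    ∃ u : List Bool, calG f g (g (word f g t x)) = word f g u x := by
  have hyI : word f g t x ∈ unitI := word_maps hA t hxI
  have hg0 : g 0 ∈ unitI := hA.g_maps mem01
  have hy0 : 0 < word f g t x := ((g_mono hA).lt_iff_lt mem01 hyI).mp hz.1
  have hylt : word f g t x < g 0 :=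
    ((g_mono hA).lt_iff_lt hyI hg0).mp (lt_trans hz.2 hSo.2)
  obtain ⟨k, u, hqmem, hiter⟩ :=
    ladder_f hA hSo hx hxI t hy0 (lt_trans hylt hA.g0_lt_f1).le
  have hqI : word f g u x ∈ unitI := word_maps hA u hxI
  have hgy : Function.invFunOn g unitI (g (word f g t x)) = word f g t x :=
    hA.g_inj.leftInvOn_invFunOn hyI
  have harg : ∀ n ≤ k, (Function.invFunOn f unitI)^[n] (word f g t x)
      = f^[k - n] (word f g u x) := by
    intro n hn
    rw [← hiter, invFunOn_iterate hA.f_inj hA.f_maps hqI n k hn]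
  have hkS : k ∈ {n : ℕ |
      (Function.invFunOn f unitI)^[n] (word f g t x) ∈ Fint f 1} := by
    rw [Set.mem_setOf_eq, harg k le_rfl]
    simpa using hqmem
  have hm : sInf {n : ℕ |
      (Function.invFunOn f unitI)^[n] (word f g t x) ∈ Fint f 1} ≤ k :=
    Nat.sInf_le hkS
  refine ⟨List.replicate (k - sInf {n : ℕ |
      (Function.invFunOn f unitI)^[n] (word f g t x) ∈ Fint f 1}) true ++ u, ?_⟩
  unfold calG
  simp only [hgy]
  rw [word_replicate_true, harg _ hm]

/-- `𝓕` of an orbit point of `x ∈ int W` whose last applied generator was `f`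
is again an orbit point of `x` (or `x` itself). -/
lemma calF_word (hA : MemA f g) (hSo : So f g) {x : ℝ}
    (hx : x ∈ Set.Ioo (g 0) (f 1)) (hxI : x ∈ unitI) (t : List Bool)
    (hz : f (word f g t x) ∈ Set.Ioo (g 0) (f 1)) :
    ∃ u : List Bool, calF f g (f (word f g t x)) = word f g u x := by
  have hyI : word f g t x ∈ unitI := word_maps hA t hxI
  have hf1 : f 1 ∈ unitI := hA.f_maps mem11
  have hy1 : word f g t x < 1 := ((f_mono hA).lt_iff_lt hyI mem11).mp hz.2
  have hy0 : 0 < word f g t x :=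
    ((f_mono hA).lt_iff_lt mem01 hyI).mp
      (by rw [hA.f_zero]; exact lt_trans hA.g0_pos hz.1)
  have hyg0 : g 0 < word f g t x :=
    lt_trans hz.1 (hA.f_lt_id _ ⟨hy0, hy1⟩)
  obtain ⟨k, u, hqmem, hiter⟩ := ladder_g hA hSo hx hxI t hyg0.le hy1
  have hqI : word f g u x ∈ unitI := word_maps hA u hxI
  have hfy : Function.invFunOn f unitI (f (word f g t x)) = word f g t x :=
    hA.f_inj.leftInvOn_invFunOn hyI
  have harg : ∀ n ≤ k, (Function.invFunOn g unitI)^[n] (word f g t x)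
      = g^[k - n] (word f g u x) := by
    intro n hn
    rw [← hiter, invFunOn_iterate hA.g_inj hA.g_maps hqI n k hn]
  have hkS : k ∈ {n : ℕ |
      (Function.invFunOn g unitI)^[n] (word f g t x) ∈ Gint g 1} := by
    rw [Set.mem_setOf_eq, harg k le_rfl]
    simpa using hqmem
  have hm : sInf {n : ℕ |
      (Function.invFunOn g unitI)^[n] (word f g t x) ∈ Gint g 1} ≤ k :=
    Nat.sInf_le hkS
  refine ⟨List.replicate (k - sInf {n : ℕ |
      (Function.invFunOn g unitI)^[n] (word f g t x) ∈ Gint g 1}) false ++ u, ?_⟩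
  unfold calF
  simp only [hfy]
  rw [word_replicate_false, harg _ hm]

end Aux

/-- for `(f,g) ∈ 𝒞` with minimal set `K` and a nonempty open interval
`J ⊆ int W` meeting `K`: if `J ⊆ int (R_f \ R_g)` then `𝓖(J)` meets `K`, and if
`J ⊆ int (R_g \ R_f)` then `𝓕(J)` meets `K`. -/
theorem image_meets_minimal_set_overlap (f g : ℝ → ℝ) (Hf Hg K J : Set ℝ)
    (hC : MemC f g Hf Hg) (hK : IsMinimalSet f g K)
    (hJ : IsOpenInterval J) (hJW : J ⊆ interior (ovW f g)) (hJK : (J ∩ K).Nonempty) :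
    (J ⊆ interior (Rf f g Hg \ Rg f g Hf) → ((calG f g '' J) ∩ K).Nonempty) ∧
    (J ⊆ interior (Rg f g Hf \ Rf f g Hg) → ((calF f g '' J) ∩ K).Nonempty) := by
  obtain ⟨hA, hSo, hH, _, _⟩ := hC
  obtain ⟨x, hxJ, hxK⟩ := hJK
  have hIoo : interior (ovW f g) = Set.Ioo (g 0) (f 1) := by
    rw [ovW, interior_Icc]
  have hxIoo : x ∈ Set.Ioo (g 0) (f 1) := by rw [← hIoo]; exact hJW hxJ
  have hf1 : f 1 ∈ unitI := hA.f_maps mem11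
  have hxI : x ∈ unitI :=
    ⟨le_trans hA.g0_pos.le hxIoo.1.le, le_trans hxIoo.2.le hf1.2⟩
  have hxW : x ∈ ovW f g := ⟨hxIoo.1.le, hxIoo.2.le⟩
  have hJopen : IsOpen J := by
    obtain ⟨a, b, _, rfl⟩ := hJ; exact isOpen_Ioo
  have hxcl : x ∈ closure (orbitP f g x) := by
    rw [hK.2.2 x hxK]; exact hxK
  obtain ⟨z, hzJ, hzO⟩ := _root_.mem_closure_iff.mp hxcl J hJopen hxJ
  obtain ⟨w, hwne, hwz⟩ := hzO
  have hzIoo : z ∈ Set.Ioo (g 0) (f 1) := by rw [← hIoo]; exact hJW hzJ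
  cases w with
  | nil => exact absurd rfl hwne
  | cons b t =>
    constructor
    · intro hsub
      have hzRf : z ∈ Rf f g Hg := (interior_subset (hsub hzJ)).1
      cases b
      · -- last generator was `g`: `𝓖 z` is an orbit point, hence in `K`
        have hz' : z = g (word f g t x) := by rw [← hwz, word_cons_false]
        obtain ⟨u, hu⟩ := calG_word hA hSo hxIoo hxI t (by rw [← hz']; exact hzIoo)
        refine ⟨calG f g z, ⟨z, hzJ, rfl⟩, ?_⟩
        rw [hz', hu]
        exact word_mem_K hK hxK u
      · -- last generator was `f`: impossible, `𝓕 z` would be an orbit point in `Hg`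
        exfalso
        have hz' : z = f (word f g t x) := by rw [← hwz, word_cons_true]
        obtain ⟨u, hu⟩ := calF_word hA hSo hxIoo hxI t (by rw [← hz']; exact hzIoo)
        have hHg : calF f g z ∈ Hg := hzRf.2
        rw [hz', hu] at hHg
        exact (no_hole hA hH hxW u).2 hHg
    · intro hsub
      have hzRg : z ∈ Rg f g Hf := (interior_subset (hsub hzJ)).1
      cases b
      · -- last generator was `g`: impossible, `𝓖 z` would be an orbit point in `Hf`
        exfalso
        have hz' : z = g (word f g t x) := by rw [← hwz, word_cons_false]
        obtain ⟨u, hu⟩ := calG_word hA hSo hxIoo hxI t (by rw [← hz']; exact hzIoo)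
        have hHf : calG f g z ∈ Hf := hzRg.2
        rw [hz', hu] at hHf
        exact (no_hole hA hH hxW u).1 hHf
      · -- last generator was `f`: `𝓕 z` is an orbit point, hence in `K`
        have hz' : z = f (word f g t x) := by rw [← hwz, word_cons_true]
        obtain ⟨u, hu⟩ := calF_word hA hSo hxIoo hxI t (by rw [← hz']; exact hzIoo)
        refine ⟨calF f g z, ⟨z, hzJ, rfl⟩, ?_⟩
        rw [hz', hu]
        exact word_mem_K hK hxK u


end IFSPaper
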